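/- With the same hypotheses (P₀(X) = Σ_α V_α† X V_α a projection onto a unital *-subalgebra X of B(H)), the image of P₀ equals the commutant-type set C = {X ∈ B(H) : [V_α, X] = [V_α†, X] = 0 for all α}; in particular every element of C is fixed by P₀. -/

import Mathlib

/-- With `P₀ X = ∑ α, (V α)† * X * (V α)` a projection onto a unital
*-subalgebra of `B(H)`, the range of `P₀` equals the commutant-type set
`C = {X | [V α, X] = [(V α)†, X] = 0 for all α}`; in particular every element of `C`
is fixed by `P₀`. -/
theorem stmt1 {H : Type*} [NormedAddCommGroup H] [InnerProductSpace ℂ H] [CompleteSpace H]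
    {ι : Type*} [Fintype ι] (V : ι → (H →L[ℂ] H))
    (P₀ : (H →L[ℂ] H) → (H →L[ℂ] H))
    (hP₀ : ∀ X, P₀ X = ∑ α, star (V α) * X * V α)
    (hproj : ∀ X, P₀ (P₀ X) = P₀ X)
    (S : StarSubalgebra ℂ (H →L[ℂ] H))
    (hrange : Set.range P₀ = S) :
    Set.range P₀ = {X : H →L[ℂ] H | ∀ α, Commute (V α) X ∧ Commute (star (V α)) X} ∧
    ∀ X : H →L[ℂ] H, (∀ α, Commute (V α) X ∧ Commute (star (V α)) X) → P₀ X = X := by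
  have hfix : ∀ Y ∈ Set.range P₀, P₀ Y = Y := by
    rintro Y ⟨Z, rfl⟩; exact hproj Z
  have h1mem : (1 : H →L[ℂ] H) ∈ Set.range P₀ := by
    rw [hrange]; exact S.one_mem
  have hsum1 : ∑ α, star (V α) * V α = 1 := by
    have h := hfix 1 h1mem
    rw [hP₀] at h
    simpa using h
  -- every element of the commutant set is fixed
  have hfix2 : ∀ X : H →L[ℂ] H,
      (∀ α, Commute (V α) X ∧ Commute (star (V α)) X) → P₀ X = X := by
    intro X hc
    rw [hP₀]
    have : ∀ α, star (V α) * X * V α = star (V α) * V α * X := by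
      intro α
      rw [mul_assoc, ← (hc α).1.eq, ← mul_assoc]
    rw [Finset.sum_congr rfl fun α _ => this α, ← Finset.sum_mul, hsum1, one_mul]
  -- key: range elements commute with every V α
  have key : ∀ X ∈ Set.range P₀, ∀ α, V α * X = X * V α := by
    intro X hX α
    have hstar : star X ∈ Set.range P₀ := by
      rw [hrange] at hX ⊢; exact star_mem hX
    have hmul : star X * X ∈ Set.range P₀ := by
      rw [hrange] at hX hstar ⊢; exact S.mul_mem hstar hX
    have e1 : P₀ X = X := hfix X hX
    have e2 : P₀ (star X) = star X := hfix _ hstar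
    have e3 : P₀ (star X * X) = star X * X := hfix _ hmul
    set A : ι → (H →L[ℂ] H) := fun β => V β * X - X * V β with hA
    have hzero : ∑ β, star (A β) * A β = 0 := by
      have expand : ∀ β, star (A β) * A β
          = star X * (star (V β) * V β) * X - star X * (star (V β) * X * V β)
            - (star (V β) * star X * V β) * X + star (V β) * (star X * X) * V β := by
        intro β
        simp only [hA, star_sub, star_mul]
        noncomm_ring
      rw [Finset.sum_congr rfl fun β _ => expand β]
      rw [Finset.sum_add_distrib, Finset.sum_sub_distrib, Finset.sum_sub_distrib]
      have s1 : ∑ β, star X * (star (V β) * V β) * X = star X * X := by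
        rw [← Finset.sum_mul, ← Finset.mul_sum, hsum1, mul_one]
      have s2 : ∑ β, star X * (star (V β) * X * V β) = star X * X := by
        rw [← Finset.mul_sum, ← hP₀, e1]
      have s3 : ∑ β, (star (V β) * star X * V β) * X = star X * X := by
        rw [← Finset.sum_mul, ← hP₀, e2]
      have s4 : ∑ β, star (V β) * (star X * X) * V β = star X * X := by
        rw [← hP₀, e3]
      rw [s1, s2, s3, s4]
      abel
    -- pointwise: sum of norms squared is zero
    have hAzero : A α = 0 := by
      ext x
      have hsum : ∑ β, (‖A β x‖ ^ 2 : ℝ) = 0 := by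
        have h0 : (inner ℂ x ((∑ β, star (A β) * A β) x) : ℂ) = 0 := by
          rw [hzero]; simp
        rw [ContinuousLinearMap.sum_apply, inner_sum] at h0
        have hterm : ∀ β, (inner ℂ x ((star (A β) * A β) x) : ℂ) = ((‖A β x‖ ^ 2 : ℝ) : ℂ) := by
          intro β
          rw [ContinuousLinearMap.mul_apply, ContinuousLinearMap.star_eq_adjoint,
            ContinuousLinearMap.adjoint_inner_right, inner_self_eq_norm_sq_to_K]
          norm_cast
        rw [Finset.sum_congr rfl fun β _ => hterm β] at h0
        have := congrArg Complex.re h0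
        simpa [← Complex.ofReal_pow] using this
      have hβ : (‖A α x‖ ^ 2 : ℝ) = 0 := by
        have := (Finset.sum_eq_zero_iff_of_nonneg
          (fun β _ => by positivity)).mp hsum α (Finset.mem_univ α)
        exact this
      have : ‖A α x‖ = 0 := by nlinarith [norm_nonneg (A α x)]
      simpa using norm_eq_zero.mp this
    have := sub_eq_zero.mp hAzero
    exact this
  constructor
  · ext X
    simp only [Set.mem_setOf_eq]
    constructor
    · intro hX α
      have hstar : star X ∈ Set.range P₀ := by
        rw [hrange] at hX ⊢; exact star_mem hX
      refine ⟨key X hX α, ?_⟩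
      have h := key (star X) hstar α
      have := congrArg star h
      simp only [star_mul, star_star] at this
      exact this.symm
    · intro hc
      exact ⟨X, hfix2 X hc⟩
  · exact hfix2
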